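/- Let X be a topological vector space, A ⊆ X a convex set, x* ∈ A a local minimizer of the problem: minimize f₀(x) over x ∈ A subject to fᵢ(x) ≤ 0 for i = 1,…,n. Suppose each φᵢ : X → ℝ ∪ {+∞} satisfies φᵢ(0) = 0, 0 ∈ int dom φᵢ, and is a weak upper convex approximation of fᵢ at x* (for each Δx there exist α₀ > 0 and β(α) → 0 with fᵢ(x* + αΔx) − fᵢ(x*) ≤ φᵢ(αΔx) + αβ(α) for α ∈ [0, α₀)). If g(·) = max{φ₀(·), φ₁(·) + f₁(x*), …, φₙ(·) + fₙ(x*)} is subhomogeneous, then 0 is a global minimizer of g on A − x*. -/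

import Mathlib

open Filter Topology

theorem stmt9 {X : Type*} [AddCommGroup X] [Module ℝ X] [TopologicalSpace X]
    [IsTopologicalAddGroup X] [ContinuousSMul ℝ X]
    (n : ℕ) (A : Set X) (hA : Convex ℝ A)
    (f : Fin (n + 1) → X → ℝ) (φ : Fin (n + 1) → X → EReal) (xs : X)
    (hxs : xs ∈ A)
    (hfeas : ∀ i : Fin (n + 1), i ≠ 0 → f i xs ≤ 0)
    (hlocmin : ∃ U ∈ 𝓝 xs, ∀ x ∈ U ∩ A, (∀ i : Fin (n + 1), i ≠ 0 → f i x ≤ 0) →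
      f 0 xs ≤ f 0 x)
    (hφ0 : ∀ i, φ i 0 = 0)
    (hφdom : ∀ i, (0 : X) ∈ interior {y | φ i y ≠ ⊤})
    (hφconv : ∀ i, ∀ x y : X, ∀ a b : ℝ, 0 ≤ a → 0 ≤ b → a + b = 1 →
      φ i (a • x + b • y) ≤ (a : EReal) * φ i x + (b : EReal) * φ i y)
    (hφuca : ∀ i, ∀ Δx : X, ∃ α₀ > (0 : ℝ), ∃ β : ℝ → ℝ,
      Tendsto β (𝓝[>] (0 : ℝ)) (𝓝 0) ∧
      ∀ α : ℝ, 0 ≤ α → α < α₀ →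
        ((f i (xs + α • Δx) - f i xs : ℝ) : EReal) ≤ φ i (α • Δx) + ((α * β α : ℝ) : EReal))
    (g : X → EReal)
    (hgdef : ∀ y : X, g y = ⨆ i : Fin (n + 1),
      (φ i y + if i = 0 then 0 else ((f i xs : ℝ) : EReal)))
    (hsub : ∀ y : X, ∀ a : ℝ, 0 < a → a < 1 → g (a • y) ≤ (a : EReal) * g y) :
    ∀ z ∈ A, g 0 ≤ g (z - xs) := by
  intro z hz
  -- g 0 = 0
  have hg0 : g 0 = 0 := by
    rw [hgdef]
    apply le_antisymm
    · apply iSup_le; intro i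
      rw [hφ0]
      rcases eq_or_ne i 0 with h | h
      · simp [h]
      · rw [zero_add, if_neg h]
        exact_mod_cast hfeas i h
    · have := le_iSup (fun i => φ i 0 + if i = 0 then 0 else ((f i xs : ℝ) : EReal)) 0
      simpa [hφ0] using this
  rw [hg0]
  by_contra hneg
  push_neg at hneg
  set Δx := z - xs with hΔx
  obtain ⟨c, hc1, hc2⟩ : ∃ c : ℝ, g Δx < (c : EReal) ∧ (c : ℝ) < 0 := by
    obtain ⟨c, h1, h2⟩ := EReal.lt_iff_exists_real_btwn.1 hneg
    exact ⟨c, h1, by exact_mod_cast h2⟩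
  obtain ⟨U, hU, hUmin⟩ := hlocmin
  choose α₀ hα₀pos β hβtend hβineq using fun i => hφuca i Δx
  -- find a suitable small α
  have hev : ∀ᶠ α in 𝓝[>] (0 : ℝ),
      0 < α ∧ α < 1 ∧ (∀ i, α < α₀ i ∧ β i α < -c) ∧ xs + α • Δx ∈ U := by
    have h1 : ∀ᶠ α in 𝓝[>] (0 : ℝ), 0 < α := self_mem_nhdsWithin
    have h2 : ∀ᶠ α in 𝓝[>] (0 : ℝ), α < 1 :=
      eventually_nhdsWithin_of_eventually_nhds (eventually_lt_nhds zero_lt_one)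
    have h3 : ∀ᶠ α in 𝓝[>] (0 : ℝ), ∀ i, α < α₀ i ∧ β i α < -c := by
      rw [eventually_all]
      intro i
      have ha : ∀ᶠ α in 𝓝[>] (0 : ℝ), α < α₀ i :=
        eventually_nhdsWithin_of_eventually_nhds (eventually_lt_nhds (hα₀pos i))
      have hb : ∀ᶠ α in 𝓝[>] (0 : ℝ), β i α < -c :=
        (hβtend i).eventually (eventually_lt_nhds (by linarith))
      exact ha.and hb
    have h4 : ∀ᶠ α in 𝓝[>] (0 : ℝ), xs + α • Δx ∈ U := by
      have hcont : Tendsto (fun α : ℝ => xs + α • Δx) (𝓝 0) (𝓝 xs) := by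
        have : Continuous (fun α : ℝ => xs + α • Δx) := by continuity
        have := this.tendsto 0
        simpa using this
      exact eventually_nhdsWithin_of_eventually_nhds (hcont.eventually_mem hU)
    exact h1.and (h2.and (h3.and h4))
  obtain ⟨α, hαpos, hα1, hαi, hαU⟩ := hev.exists
  -- the perturbed point
  set x := xs + α • Δx with hx
  have hxA : x ∈ A := by
    have h := hA hxs hz (by linarith : (0:ℝ) ≤ 1 - α) (le_of_lt hαpos) (by ring)
    have : (1 - α) • xs + α • z = xs + α • Δx := by
      rw [hΔx, smul_sub, sub_smul, one_smul]; abel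
    rwa [this] at h
  -- key estimate per index
  have hkey : ∀ i : Fin (n + 1),
      f i x - f i xs ≤ α * c - (if i = 0 then 0 else f i xs) + α * β i α := by
    intro i
    set ci : ℝ := if i = 0 then 0 else f i xs with hci
    have h1 : φ i (α • Δx) + (ci : EReal) ≤ ((α * c : ℝ) : EReal) := by
      have hterm : φ i (α • Δx) + (if i = 0 then 0 else ((f i xs : ℝ) : EReal)) ≤ g (α • Δx) := by
        rw [hgdef]
        exact le_iSup (fun j => φ j (α • Δx) + if j = 0 then 0 else ((f j xs : ℝ) : EReal)) i
      have hterm' : φ i (α • Δx) + (ci : EReal) ≤ g (α • Δx) := by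
        rcases eq_or_ne i 0 with h | h <;> simp only [hci, h, if_pos, if_neg, ite_true,
          ite_false] at hterm ⊢ <;> simpa using hterm
      have h2 : g (α • Δx) ≤ (α : EReal) * g Δx := hsub Δx α hαpos hα1
      have h3 : (α : EReal) * g Δx ≤ (α : EReal) * (c : EReal) :=
        mul_le_mul_of_nonneg_left (le_of_lt hc1) (by exact_mod_cast le_of_lt hαpos)
      calc φ i (α • Δx) + (ci : EReal) ≤ g (α • Δx) := hterm'
        _ ≤ (α : EReal) * g Δx := h2
        _ ≤ ((α * c : ℝ) : EReal) := by rw [EReal.coe_mul]; exact h3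
    have hφle : φ i (α • Δx) ≤ ((α * c - ci : ℝ) : EReal) := by
      have h2 := EReal.sub_le_sub h1 (le_refl (ci : EReal))
      rwa [EReal.add_sub_cancel_right, ← EReal.coe_sub] at h2
    have huca := hβineq i α (le_of_lt hαpos) (hαi i).1
    have : ((f i x - f i xs : ℝ) : EReal) ≤ ((α * c - ci + α * β i α : ℝ) : EReal) := by
      calc ((f i x - f i xs : ℝ) : EReal) ≤ φ i (α • Δx) + ((α * β i α : ℝ) : EReal) := huca
        _ ≤ ((α * c - ci : ℝ) : EReal) + ((α * β i α : ℝ) : EReal) :=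
            add_le_add_left hφle _
        _ = ((α * c - ci + α * β i α : ℝ) : EReal) := by rw [← EReal.coe_add]
    exact_mod_cast this
  -- the negative factor
  have hneg' : ∀ i : Fin (n + 1), α * c + α * β i α < 0 := by
    intro i
    have hb := (hαi i).2
    have : c + β i α < 0 := by linarith
    nlinarith
  -- feasibility of x
  have hfeasx : ∀ i : Fin (n + 1), i ≠ 0 → f i x ≤ 0 := by
    intro i hi
    have := hkey i
    rw [if_neg hi] at this
    have := hneg' i
    linarith [hkey i, hneg' i]
  have h0 := hkey 0
  rw [if_pos rfl] at h0
  have hmin := hUmin x ⟨hαU, hxA⟩ hfeasx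
  have := hneg' 0
  linarith
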